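/- arXiv:1705.01640 — 4 statements merged into one kernel-verified Lean document; each statement's English description precedes it below -/
import Mathlib

section
/- The function ξ(a,b) := (1/2)·log(1 + (√Q − a)²/(1 + b − a²)) is jointly convex on the region {(a,b) : a² ≤ b, 1 + b − a² > 0}, for any fixed Q > 0. -/
/-- A strict convex combination of two positive reals is positive. -/
lemma convex_combo_pos (a b la mu : ℝ) (ha : 0 < a) (hb : 0 < b)
    (hla : 0 ≤ la) (hmu : 0 ≤ mu) (hs : la + mu = 1) : 0 < la * a + mu * b := by
  rcases hla.eq_or_lt with h | h
  · have : mu = 1 := by linarith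
    rw [← h, this]; linarith
  · nlinarith [mul_nonneg hmu hb.le]

/-- Quadratic-over-linear convexity inequality. -/
lemma quadOverLin (x₁ x₂ y₁ y₂ la mu : ℝ) (hy₁ : 0 < y₁) (hy₂ : 0 < y₂)
    (hla : 0 ≤ la) (hmu : 0 ≤ mu) (hs : la + mu = 1) :
    (la*x₁+mu*x₂)^2/(la*y₁+mu*y₂) ≤ la*(x₁^2/y₁) + mu*(x₂^2/y₂) := by
  have hy : 0 < la*y₁+mu*y₂ := convex_combo_pos _ _ _ _ hy₁ hy₂ hla hmu hs
  have h1 : la*(x₁^2/y₁) + mu*(x₂^2/y₂) = (la*x₁^2*y₂ + mu*x₂^2*y₁)/(y₁*y₂) := by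
    field_simp
  rw [h1, div_le_div_iff₀ hy (by positivity)]
  nlinarith [mul_nonneg (mul_nonneg hla hmu) (sq_nonneg (x₁*y₂ - x₂*y₁))]

/-- Rewriting the function value. -/
lemma xi_rw (v D : ℝ) (hD : 0 < D) :
    (1/2 : ℝ) * Real.log (1 + v^2 / D) =
    -((1/2) * Real.log (1 - v^2 / (D + v^2))) := by
  have hN : 0 < D + v^2 := by positivity
  have h1 : 1 + v^2/D = (D+v^2)/D := by field_simp
  have h2 : 1 - v^2/(D+v^2) = D/(D+v^2) := by field_simp; ring
  rw [h1, h2, Real.log_div hN.ne' hD.ne', Real.log_div hD.ne' hN.ne']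
  ring

/-- The function `ξ(a,b) = (1/2) log(1 + (√Q − a)² / (1 + b − a²))` is jointly
convex on the region `{(a,b) : a² ≤ b, 1 + b − a² > 0}`, for any fixed `Q > 0`. -/
theorem xi_convexOn (Q : ℝ) (hQ : 0 < Q) :
    ConvexOn ℝ {p : ℝ × ℝ | p.1 ^ 2 ≤ p.2 ∧ 0 < 1 + p.2 - p.1 ^ 2}
      (fun p : ℝ × ℝ =>
        (1 / 2) * Real.log (1 + (Real.sqrt Q - p.1) ^ 2 / (1 + p.2 - p.1 ^ 2))) := by
  set s := Real.sqrt Q with hsdef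
  have hset : Convex ℝ {p : ℝ × ℝ | p.1 ^ 2 ≤ p.2 ∧ 0 < 1 + p.2 - p.1 ^ 2} := by
    intro p hp q hq la mu hla hmu hsum
    obtain ⟨hp1, hp2⟩ := hp
    obtain ⟨hq1, hq2⟩ := hq
    have hmu1 : mu = 1 - la := by linarith
    subst hmu1
    simp only [Set.mem_setOf_eq, Prod.fst_add, Prod.snd_add, Prod.smul_fst, Prod.smul_snd,
      smul_eq_mul]
    have h1 := mul_nonneg hla (sub_nonneg.mpr hp1)
    have h2 := mul_nonneg hmu (sub_nonneg.mpr hq1)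
    have h3 := mul_nonneg (mul_nonneg hla hmu) (sq_nonneg (p.1 - q.1))
    have h4 := convex_combo_pos _ _ _ _ hp2 hq2 hla hmu (by ring)
    constructor
    · nlinarith
    · nlinarith
  refine ⟨hset, ?_⟩
  intro p hp q hq la mu hla hmu hsum
  have hz := hset hp hq hla hmu hsum
  set z := la • p + mu • q with hzdef
  set D : ℝ × ℝ → ℝ := fun r => 1 + r.2 - r.1^2 with hDdef
  set g : ℝ × ℝ → ℝ := fun r => (s - r.1)^2 / (D r + (s - r.1)^2) with hgdef
  have hDp : 0 < D p := hp.2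
  have hDq : 0 < D q := hq.2
  have hDz : 0 < D z := hz.2
  have hNp : 0 < D p + (s - p.1)^2 := by positivity
  have hNq : 0 < D q + (s - q.1)^2 := by positivity
  have hNz : 0 < D z + (s - z.1)^2 := by positivity
  have hg0p : 0 ≤ g p := by positivity
  have hg0q : 0 ≤ g q := by positivity
  have hg1p : g p < 1 := by
    rw [hgdef]; rw [div_lt_one hNp]; linarith
  have hg1q : g q < 1 := by
    rw [hgdef]; rw [div_lt_one hNq]; linarith
  have hg1z : g z < 1 := by
    rw [hgdef]; rw [div_lt_one hNz]; linarith
  have hg0z : 0 ≤ g z := by positivity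
  have hz1 : z.1 = la * p.1 + mu * q.1 := by
    simp [hzdef, Prod.fst_add, Prod.smul_fst, smul_eq_mul]
  have hz2 : z.2 = la * p.2 + mu * q.2 := by
    simp [hzdef, Prod.snd_add, Prod.smul_snd, smul_eq_mul]
  have hv : s - z.1 = la * (s - p.1) + mu * (s - q.1) := by
    rw [hz1]; linear_combination (-s) * hsum
  have hN : D z + (s - z.1)^2 = la * (D p + (s - p.1)^2) + mu * (D q + (s - q.1)^2) := by
    simp only [hDdef]
    rw [hz1, hz2]; linear_combination (-(1 + s^2)) * hsum
  have hgconv : g z ≤ la * g p + mu * g q := by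
    have key := quadOverLin (s - p.1) (s - q.1) (D p + (s - p.1)^2) (D q + (s - q.1)^2)
      la mu hNp hNq hla hmu hsum
    simp only [hgdef]
    rw [hN, hv]
    exact key
  have hrw : ∀ r : ℝ × ℝ, 0 < D r →
      (1 / 2 : ℝ) * Real.log (1 + (s - r.1) ^ 2 / (1 + r.2 - r.1 ^ 2)) =
      -((1/2) * Real.log (1 - g r)) := by
    intro r hr
    have := xi_rw (s - r.1) (D r) hr
    simpa [hDdef, hgdef] using this
  simp only [smul_eq_mul]
  rw [hrw z hDz, hrw p hDp, hrw q hDq]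
  set t := la * g p + mu * g q with htdef
  have ht1 : t < 1 := by
    have := convex_combo_pos _ _ _ _ (by linarith : (0:ℝ) < 1 - g p)
      (by linarith : (0:ℝ) < 1 - g q) hla hmu hsum
    nlinarith
  have ht0 : 0 ≤ t := by positivity
  have step1 : -((1/2 : ℝ) * Real.log (1 - g z)) ≤ -((1/2) * Real.log (1 - t)) := by
    have := Real.log_le_log (by linarith : (0:ℝ) < 1 - t) (by linarith : 1 - t ≤ 1 - g z)
    linarith
  have hconc : ConcaveOn ℝ (Set.Ioi (0:ℝ)) Real.log := strictConcaveOn_log_Ioi.concaveOn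
  have step2 : la * Real.log (1 - g p) + mu * Real.log (1 - g q) ≤ Real.log (1 - t) := by
    have h := hconc.2 (Set.mem_Ioi.mpr (by linarith : (0:ℝ) < 1 - g p))
      (Set.mem_Ioi.mpr (by linarith : (0:ℝ) < 1 - g q)) hla hmu hsum
    simp only [smul_eq_mul] at h
    have heq : la * (1 - g p) + mu * (1 - g q) = 1 - t := by
      linear_combination hsum
    rw [heq] at h
    exact h
  linarith
end

section
/- The determinant of the Hessian of ξ(a,b) = (1/2)·log(1 + (√Q − a)²/(1 + b − a²)) equals (√Q − a)⁴ / [(1 + b − a²)·((√Q − a)² + 1 + b − a²)]² (up to the stated denominator structure), and is nonnegative whenever a² ≤ b. -/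
/-- The function `ξ(a,b) = (1/2) log(1 + (√Q − a)² / (1 + b − a²))`. -/
noncomputable def xi (Q a b : ℝ) : ℝ :=
  (1 / 2) * Real.log (1 + (Real.sqrt Q - a) ^ 2 / (1 + b - a ^ 2))

lemma xi_eq (Q : ℝ) (hQ : 0 < Q) (x y : ℝ) (h : x ^ 2 < y) :
    xi Q x y = (1/2) * (Real.log (1 + y + Q - 2 * Real.sqrt Q * x)
      - Real.log (1 + y - x ^ 2)) := by
  set s := Real.sqrt Q with hsdef
  have hs : s ^ 2 = Q := Real.sq_sqrt hQ.le
  have hD : 0 < 1 + y - x ^ 2 := by linarith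
  have hNe : 1 + y + Q - 2 * s * x = (1 + y - x ^ 2) + (s - x) ^ 2 := by rw [← hs]; ring
  have hN : 0 < 1 + y + Q - 2 * s * x := by rw [hNe]; positivity
  have h1 : 1 + (s - x) ^ 2 / (1 + y - x ^ 2) = (1 + y + Q - 2 * s * x) / (1 + y - x ^ 2) := by
    rw [hNe]; field_simp
  unfold xi
  rw [h1, Real.log_div hN.ne' hD.ne']

lemma hasDerivAt_xi_a (Q : ℝ) (hQ : 0 < Q) (x y : ℝ) (h : x ^ 2 < y) :
    HasDerivAt (fun x' => xi Q x' y)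
      (-(Real.sqrt Q) / (1 + y + Q - 2 * Real.sqrt Q * x) + x / (1 + y - x ^ 2)) x := by
  set s := Real.sqrt Q with hsdef
  have hD : 0 < 1 + y - x ^ 2 := by linarith
  have hs : s ^ 2 = Q := Real.sq_sqrt hQ.le
  have hN : 0 < 1 + y + Q - 2 * s * x := by nlinarith [sq_nonneg (s - x)]
  have hNd : HasDerivAt (fun x' => 1 + y + Q - 2 * s * x') (-(2*s)) x := by
    simpa using ((hasDerivAt_id x).const_mul (2*s)).const_sub (1 + y + Q)
  have hDd : HasDerivAt (fun x' => 1 + y - x' ^ 2) (-(2*x)) x := by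
    simpa using (hasDerivAt_pow 2 x).const_sub (1 + y)
  have hlogN := hNd.log hN.ne'
  have hlogD := hDd.log hD.ne'
  have hmain := (hlogN.sub hlogD).const_mul (1/2)
  have hopen : IsOpen {x' : ℝ | x' ^ 2 < y} :=
    isOpen_lt (by continuity) continuous_const
  have heq : (fun x' => xi Q x' y) =ᶠ[nhds x]
      (fun x' => (1/2) * (Real.log (1 + y + Q - 2 * s * x') - Real.log (1 + y - x' ^ 2))) := by
    filter_upwards [hopen.mem_nhds h] with z hz using xi_eq Q hQ z y hz
  have hres := hmain.congr_of_eventuallyEq heq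
  refine hres.congr_deriv ?_
  field_simp
  ring

lemma hasDerivAt_xi_b (Q : ℝ) (hQ : 0 < Q) (x y : ℝ) (h : x ^ 2 < y) :
    HasDerivAt (fun y' => xi Q x y')
      ((1/2) * (1 / (1 + y + Q - 2 * Real.sqrt Q * x) - 1 / (1 + y - x ^ 2))) y := by
  set s := Real.sqrt Q with hsdef
  have hD : 0 < 1 + y - x ^ 2 := by linarith
  have hs : s ^ 2 = Q := Real.sq_sqrt hQ.le
  have hN : 0 < 1 + y + Q - 2 * s * x := by nlinarith [sq_nonneg (s - x)]
  have hNd : HasDerivAt (fun y' => 1 + y' + Q - 2 * s * x) 1 y := by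
    simpa using (((hasDerivAt_id y).const_add 1).add_const Q).sub_const (2 * s * x)
  have hDd : HasDerivAt (fun y' => 1 + y' - x ^ 2) 1 y := by
    simpa using ((hasDerivAt_id y).const_add 1).sub_const (x ^ 2)
  have hlogN := hNd.log hN.ne'
  have hlogD := hDd.log hD.ne'
  have hmain := (hlogN.sub hlogD).const_mul (1/2)
  have hopen : IsOpen {y' : ℝ | x ^ 2 < y'} := isOpen_lt continuous_const continuous_id
  have heq : (fun y' => xi Q x y') =ᶠ[nhds y]
      (fun y' => (1/2) * (Real.log (1 + y' + Q - 2 * s * x) - Real.log (1 + y' - x ^ 2))) := by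
    filter_upwards [hopen.mem_nhds h] with z hz using xi_eq Q hQ x z hz
  have hres := hmain.congr_of_eventuallyEq heq
  simpa using hres

/-- On the domain `a² < b`, the determinant of the Hessian of `ξ` equals
`(√Q − a)⁴ / (2 (1 + b − a²)³ ((√Q − a)² + 1 + b − a²)²)` (the stated denominator structure),
and this quantity is nonnegative whenever `a² ≤ b`. -/
theorem xi_hessian_det (Q : ℝ) (hQ : 0 < Q) (a b : ℝ) (hab : a ^ 2 < b) :
    deriv (fun x => deriv (fun x' => xi Q x' b) x) a
        * deriv (fun y => deriv (fun y' => xi Q a y') y) b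
      - deriv (fun y => deriv (fun x => xi Q x y) a) b
        * deriv (fun x => deriv (fun y => xi Q x y) b) a
      = (Real.sqrt Q - a) ^ 4
          / (2 * (1 + b - a ^ 2) ^ 3 * ((Real.sqrt Q - a) ^ 2 + 1 + b - a ^ 2) ^ 2) ∧
    0 ≤ (Real.sqrt Q - a) ^ 4
          / (2 * (1 + b - a ^ 2) ^ 3 * ((Real.sqrt Q - a) ^ 2 + 1 + b - a ^ 2) ^ 2) := by
  set s := Real.sqrt Q with hsdef
  have hs : s ^ 2 = Q := Real.sq_sqrt hQ.le
  have hD : 0 < 1 + b - a ^ 2 := by linarith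
  have hN : 0 < 1 + b + Q - 2 * s * a := by nlinarith [sq_nonneg (s - a)]
  have hopenx : IsOpen {x' : ℝ | x' ^ 2 < b} := isOpen_lt (by continuity) continuous_const
  have hopeny : IsOpen {y' : ℝ | a ^ 2 < y'} := isOpen_lt continuous_const continuous_id
  -- derivative bricks at (a,b)
  have hNda : HasDerivAt (fun z => 1 + b + Q - 2 * s * z) (-(2*s)) a := by
    simpa using ((hasDerivAt_id a).const_mul (2*s)).const_sub (1 + b + Q)
  have hDda : HasDerivAt (fun z => 1 + b - z ^ 2) (-(2*a)) a := by
    simpa using (hasDerivAt_pow 2 a).const_sub (1 + b)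
  have hNdb : HasDerivAt (fun z => 1 + z + Q - 2 * s * a) 1 b := by
    simpa using (((hasDerivAt_id b).const_add 1).add_const Q).sub_const (2 * s * a)
  have hDdb : HasDerivAt (fun z => 1 + z - a ^ 2) 1 b := by
    simpa using ((hasDerivAt_id b).const_add 1).sub_const (a ^ 2)
  -- ξ_aa
  have e_aa : deriv (fun x => deriv (fun x' => xi Q x' b) x) a
      = (0 * (1 + b + Q - 2*s*a) - (-s) * (-(2*s))) / (1 + b + Q - 2*s*a) ^ 2
        + (1 * (1 + b - a^2) - a * (-(2*a))) / (1 + b - a^2) ^ 2 := by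
    have heq : (fun x => deriv (fun x' => xi Q x' b) x) =ᶠ[nhds a]
        (fun z => -s / (1 + b + Q - 2*s*z) + z / (1 + b - z^2)) := by
      filter_upwards [hopenx.mem_nhds hab] with z hz using (hasDerivAt_xi_a Q hQ z b hz).deriv
    rw [heq.deriv_eq]
    exact (((hasDerivAt_const a (-s)).div hNda hN.ne').add
      ((hasDerivAt_id a).div hDda hD.ne')).deriv
  -- ξ_bb
  have e_bb : deriv (fun y => deriv (fun y' => xi Q a y') y) b
      = (1/2) * ((0 * (1 + b + Q - 2*s*a) - 1 * 1) / (1 + b + Q - 2*s*a) ^ 2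
        - (0 * (1 + b - a^2) - 1 * 1) / (1 + b - a^2) ^ 2) := by
    have heq : (fun y => deriv (fun y' => xi Q a y') y) =ᶠ[nhds b]
        (fun z => (1/2) * (1 / (1 + z + Q - 2*s*a) - 1 / (1 + z - a^2))) := by
      filter_upwards [hopeny.mem_nhds hab] with z hz using (hasDerivAt_xi_b Q hQ a z hz).deriv
    rw [heq.deriv_eq]
    exact ((((hasDerivAt_const b (1:ℝ)).div hNdb hN.ne').sub
      ((hasDerivAt_const b (1:ℝ)).div hDdb hD.ne')).const_mul (1/2)).deriv
  -- ξ_ba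
  have e_ba : deriv (fun y => deriv (fun x => xi Q x y) a) b
      = (0 * (1 + b + Q - 2*s*a) - (-s) * 1) / (1 + b + Q - 2*s*a) ^ 2
        + (0 * (1 + b - a^2) - a * 1) / (1 + b - a^2) ^ 2 := by
    have heq : (fun y => deriv (fun x => xi Q x y) a) =ᶠ[nhds b]
        (fun z => -s / (1 + z + Q - 2*s*a) + a / (1 + z - a^2)) := by
      filter_upwards [hopeny.mem_nhds hab] with z hz using (hasDerivAt_xi_a Q hQ a z hz).deriv
    rw [heq.deriv_eq]
    exact (((hasDerivAt_const b (-s)).div hNdb hN.ne').add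
      ((hasDerivAt_const b a).div hDdb hD.ne')).deriv
  -- ξ_ab
  have e_ab : deriv (fun x => deriv (fun y => xi Q x y) b) a
      = (1/2) * ((0 * (1 + b + Q - 2*s*a) - 1 * (-(2*s))) / (1 + b + Q - 2*s*a) ^ 2
        - (0 * (1 + b - a^2) - 1 * (-(2*a))) / (1 + b - a^2) ^ 2) := by
    have heq : (fun x => deriv (fun y => xi Q x y) b) =ᶠ[nhds a]
        (fun z => (1/2) * (1 / (1 + b + Q - 2*s*z) - 1 / (1 + b - z^2))) := by
      filter_upwards [hopenx.mem_nhds hab] with z hz using (hasDerivAt_xi_b Q hQ z b hz).deriv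
    rw [heq.deriv_eq]
    exact ((((hasDerivAt_const a (1:ℝ)).div hNda hN.ne').sub
      ((hasDerivAt_const a (1:ℝ)).div hDda hD.ne')).const_mul (1/2)).deriv
  have hE : 0 < (s - a) ^ 2 + 1 + b - a ^ 2 := by nlinarith [sq_nonneg (s - a)]
  constructor
  · rw [e_aa, e_bb, e_ba, e_ab]
    have hQs : Q = s ^ 2 := hs.symm
    rw [hQs] at hN ⊢
    have h1 := hN.ne'
    have h2 := hD.ne'
    have h3 := hE.ne'
    rw [show (s - a) ^ 2 + 1 + b - a ^ 2 = 1 + b + s ^ 2 - 2 * s * a by ring]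
    obtain ⟨N, hNN⟩ : ∃ N, N = 1 + b + s ^ 2 - 2 * s * a := ⟨_, rfl⟩
    rw [← hNN] at h1 ⊢
    field_simp
    rw [hNN]
    ring
  · have hden : 0 < 2 * (1 + b - a ^ 2) ^ 3 * ((s - a) ^ 2 + 1 + b - a ^ 2) ^ 2 :=
      mul_pos (mul_pos two_pos (pow_pos hD 3)) (pow_pos hE 2)
    exact div_nonneg (by positivity) hden.le
end

section
/- For every δ ∈ [0,1], the function ρ ↦ (1/2)·[log((1+P₂+P₁+Q+2ρ√(P₁Q))/(δ+P₁+Q+2ρ√(P₁Q))) + log((δ+(1−ρ²)P₁)/(1+P₂))] is concave on [−1, 0]. -/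
lemma aux_poly_concave (g t u : ℝ) (hg : 0 < g) :
    2 * (t - u) ^ 2 * g ^ 2 ≤ (g + 2 * u ^ 2) * (g + t ^ 2) ^ 2 := by
  nlinarith [mul_nonneg (add_nonneg hg.le (by positivity : (0:ℝ) ≤ 2 * u ^ 2)) (sq_nonneg (t * t)),
    mul_nonneg hg.le (sq_nonneg (g + 2 * u * t))]

/-- For every `δ ∈ [0,1]`, the function
`ρ ↦ (1/2) [log((1+P₂+P₁+Q+2ρ√(P₁Q))/(δ+P₁+Q+2ρ√(P₁Q))) + log((δ+(1−ρ²)P₁)/(1+P₂))]`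
is concave on `[−1, 0]`. -/
theorem f_objective_concave (P₁ P₂ Q δ : ℝ)
    (hP₁ : 0 < P₁) (hP₂ : 0 < P₂) (hQ : 0 < Q)
    (hδ : δ ∈ Set.Icc (0 : ℝ) 1)
    (hpos1 : ∀ ρ ∈ Set.Icc (-1 : ℝ) 0, 0 < δ + P₁ + Q + 2 * ρ * Real.sqrt (P₁ * Q))
    (hpos2 : ∀ ρ ∈ Set.Icc (-1 : ℝ) 0, 0 < δ + (1 - ρ ^ 2) * P₁) :
    ConcaveOn ℝ (Set.Icc (-1 : ℝ) 0)
      (fun ρ => (1 / 2) *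
        (Real.log ((1 + P₂ + P₁ + Q + 2 * ρ * Real.sqrt (P₁ * Q))
            / (δ + P₁ + Q + 2 * ρ * Real.sqrt (P₁ * Q)))
          + Real.log ((δ + (1 - ρ ^ 2) * P₁) / (1 + P₂)))) := by
  obtain ⟨hδ0, hδ1⟩ := hδ
  set s : ℝ := Real.sqrt (P₁ * Q) with hs_def
  have hsnn : (0 : ℝ) ≤ s := Real.sqrt_nonneg _
  have hs2 : s ^ 2 = P₁ * Q := Real.sq_sqrt (by positivity)
  have hsplit : s = Real.sqrt P₁ * Real.sqrt Q := Real.sqrt_mul hP₁.le Q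
  have hPs : Real.sqrt P₁ ^ 2 = P₁ := Real.sq_sqrt hP₁.le
  have hQs : Real.sqrt Q ^ 2 = Q := Real.sq_sqrt hQ.le
  have hA : ∀ x ∈ Set.Icc (-1 : ℝ) 0, 0 < 1 + P₂ + P₁ + Q + 2 * x * s := by
    intro x hx
    have h1 := hpos1 x hx
    nlinarith
  -- derivative data
  have hder1 : ∀ x ∈ Set.Icc (-1 : ℝ) 0,
      HasDerivAt (fun y => (1 / 2 : ℝ) *
        (Real.log (1 + P₂ + P₁ + Q + 2 * y * s) - Real.log (δ + P₁ + Q + 2 * y * s)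
          + Real.log (δ + (1 - y ^ 2) * P₁) - Real.log (1 + P₂)))
        ((1 / 2 : ℝ) *
          (2 * s / (1 + P₂ + P₁ + Q + 2 * x * s) - 2 * s / (δ + P₁ + Q + 2 * x * s)
            + (-2 * P₁ * x) / (δ + (1 - x ^ 2) * P₁))) x := by
    intro x hx
    have hAx := hA x hx
    have hBx := hpos1 x hx
    have hgx := hpos2 x hx
    have hln : HasDerivAt (fun y : ℝ => 2 * y * s) (2 * s) x := by
      simpa using (((hasDerivAt_id x).const_mul (2 : ℝ)).mul_const s)
    have h1 : HasDerivAt (fun y : ℝ => Real.log (1 + P₂ + P₁ + Q + 2 * y * s))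
        (2 * s / (1 + P₂ + P₁ + Q + 2 * x * s)) x :=
      (hln.const_add (1 + P₂ + P₁ + Q)).log hAx.ne'
    have h2 : HasDerivAt (fun y : ℝ => Real.log (δ + P₁ + Q + 2 * y * s))
        (2 * s / (δ + P₁ + Q + 2 * x * s)) x :=
      (hln.const_add (δ + P₁ + Q)).log hBx.ne'
    have hg : HasDerivAt (fun y : ℝ => δ + (1 - y ^ 2) * P₁) (-2 * P₁ * x) x := by
      have := (((hasDerivAt_pow 2 x).const_sub (1 : ℝ)).mul_const P₁).const_add δ
      refine this.congr_deriv ?_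
      push_cast
      ring
    have h3 : HasDerivAt (fun y : ℝ => Real.log (δ + (1 - y ^ 2) * P₁))
        ((-2 * P₁ * x) / (δ + (1 - x ^ 2) * P₁)) x := hg.log hgx.ne'
    exact (((h1.sub h2).add h3).sub_const (Real.log (1 + P₂))).const_mul (1 / 2 : ℝ)
  have hder2 : ∀ x ∈ Set.Icc (-1 : ℝ) 0,
      HasDerivAt (fun y => (1 / 2 : ℝ) *
          (2 * s / (1 + P₂ + P₁ + Q + 2 * y * s) - 2 * s / (δ + P₁ + Q + 2 * y * s)
            + (-2 * P₁ * y) / (δ + (1 - y ^ 2) * P₁)))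
        ((1 / 2 : ℝ) *
          (-(2 * s) ^ 2 / (1 + P₂ + P₁ + Q + 2 * x * s) ^ 2
            + (2 * s) ^ 2 / (δ + P₁ + Q + 2 * x * s) ^ 2
            + (-2 * P₁ * (δ + (1 - x ^ 2) * P₁) - 4 * P₁ ^ 2 * x ^ 2)
              / (δ + (1 - x ^ 2) * P₁) ^ 2)) x := by
    intro x hx
    have hAx := hA x hx
    have hBx := hpos1 x hx
    have hgx := hpos2 x hx
    have hln : HasDerivAt (fun y : ℝ => 2 * y * s) (2 * s) x := by
      simpa using (((hasDerivAt_id x).const_mul (2 : ℝ)).mul_const s)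
    have h1 : HasDerivAt (fun y : ℝ => 2 * s / (1 + P₂ + P₁ + Q + 2 * y * s))
        (-(2 * s) ^ 2 / (1 + P₂ + P₁ + Q + 2 * x * s) ^ 2) x := by
      have := (hasDerivAt_const x (2 * s)).div (hln.const_add (1 + P₂ + P₁ + Q)) hAx.ne'
      refine this.congr_deriv ?_
      field_simp
      ring
    have h2 : HasDerivAt (fun y : ℝ => 2 * s / (δ + P₁ + Q + 2 * y * s))
        (-(2 * s) ^ 2 / (δ + P₁ + Q + 2 * x * s) ^ 2) x := by
      have := (hasDerivAt_const x (2 * s)).div (hln.const_add (δ + P₁ + Q)) hBx.ne'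
      refine this.congr_deriv ?_
      field_simp
      ring
    have hg : HasDerivAt (fun y : ℝ => δ + (1 - y ^ 2) * P₁) (-2 * P₁ * x) x := by
      have := (((hasDerivAt_pow 2 x).const_sub (1 : ℝ)).mul_const P₁).const_add δ
      refine this.congr_deriv ?_
      push_cast
      ring
    have hn : HasDerivAt (fun y : ℝ => -2 * P₁ * y) (-2 * P₁) x := by
      simpa using (hasDerivAt_id x).const_mul (-2 * P₁)
    have h3 : HasDerivAt (fun y : ℝ => (-2 * P₁ * y) / (δ + (1 - y ^ 2) * P₁))
        ((-2 * P₁ * (δ + (1 - x ^ 2) * P₁) - 4 * P₁ ^ 2 * x ^ 2)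
          / (δ + (1 - x ^ 2) * P₁) ^ 2) x := by
      have := hn.div hg hgx.ne'
      refine this.congr_deriv ?_
      field_simp
      ring
    have := ((h1.sub h2).add h3).const_mul (1 / 2 : ℝ)
    refine this.congr_deriv ?_
    ring
  -- concavity of the expanded function
  have main : ConcaveOn ℝ (Set.Icc (-1 : ℝ) 0)
      (fun y => (1 / 2 : ℝ) *
        (Real.log (1 + P₂ + P₁ + Q + 2 * y * s) - Real.log (δ + P₁ + Q + 2 * y * s)
          + Real.log (δ + (1 - y ^ 2) * P₁) - Real.log (1 + P₂))) := by
    refine concaveOn_of_hasDerivWithinAt2_nonpos (convex_Icc _ _)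
      (f' := fun x => (1 / 2 : ℝ) *
        (2 * s / (1 + P₂ + P₁ + Q + 2 * x * s) - 2 * s / (δ + P₁ + Q + 2 * x * s)
          + (-2 * P₁ * x) / (δ + (1 - x ^ 2) * P₁)))
      (f'' := fun x => (1 / 2 : ℝ) *
        (-(2 * s) ^ 2 / (1 + P₂ + P₁ + Q + 2 * x * s) ^ 2
          + (2 * s) ^ 2 / (δ + P₁ + Q + 2 * x * s) ^ 2
          + (-2 * P₁ * (δ + (1 - x ^ 2) * P₁) - 4 * P₁ ^ 2 * x ^ 2)
            / (δ + (1 - x ^ 2) * P₁) ^ 2))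
      (fun x hx => (hder1 x hx).continuousAt.continuousWithinAt)
      (fun x hx => ?_) (fun x hx => ?_) (fun x hx => ?_)
    · rw [interior_Icc] at hx
      exact (hder1 x (Set.Ioo_subset_Icc_self hx)).hasDerivWithinAt
    · rw [interior_Icc] at hx
      exact (hder2 x (Set.Ioo_subset_Icc_self hx)).hasDerivWithinAt
    · rw [interior_Icc] at hx
      have hx' := Set.Ioo_subset_Icc_self hx
      have hAx := hA x hx'
      have hBx := hpos1 x hx'
      have hgx := hpos2 x hx'
      have hu2 : (x * Real.sqrt P₁) ^ 2 = P₁ * x ^ 2 := by rw [mul_pow, hPs]; ring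
      have hQu : (Real.sqrt Q + x * Real.sqrt P₁ - x * Real.sqrt P₁) ^ 2 = Q := by
        simp [hQs]
      have hB_eq : δ + P₁ + Q + 2 * x * s
          = (δ + (1 - x ^ 2) * P₁) + (Real.sqrt Q + x * Real.sqrt P₁) ^ 2 := by
        rw [hsplit]; linear_combination (-1 : ℝ) * hQs - x ^ 2 * hPs
      have h2 := mul_le_mul_of_nonneg_left
        (aux_poly_concave (δ + (1 - x ^ 2) * P₁) (Real.sqrt Q + x * Real.sqrt P₁)
          (x * Real.sqrt P₁) hgx) (by positivity : (0:ℝ) ≤ 2 * P₁)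
      rw [hQu, hu2] at h2
      have hkey : (2 * s) ^ 2 * (δ + (1 - x ^ 2) * P₁) ^ 2
          ≤ (2 * P₁ * (δ + (1 - x ^ 2) * P₁) + 4 * P₁ ^ 2 * x ^ 2)
            * (δ + P₁ + Q + 2 * x * s) ^ 2 := by
        rw [hB_eq]
        have hs4 : (2 * s) ^ 2 = 4 * (P₁ * Q) := by rw [mul_pow, hs2]; norm_num
        rw [hs4]
        nlinarith [h2]
      have key : (2 * s) ^ 2 / (δ + P₁ + Q + 2 * x * s) ^ 2
          ≤ (2 * P₁ * (δ + (1 - x ^ 2) * P₁) + 4 * P₁ ^ 2 * x ^ 2)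
            / (δ + (1 - x ^ 2) * P₁) ^ 2 := by
        rw [div_le_div_iff₀ (by positivity) (by positivity)]
        linarith [hkey]
      have h5 : (0 : ℝ) ≤ (2 * s) ^ 2 / (1 + P₂ + P₁ + Q + 2 * x * s) ^ 2 := by positivity
      have h6 : (-2 * P₁ * (δ + (1 - x ^ 2) * P₁) - 4 * P₁ ^ 2 * x ^ 2)
            / (δ + (1 - x ^ 2) * P₁) ^ 2
          = -((2 * P₁ * (δ + (1 - x ^ 2) * P₁) + 4 * P₁ ^ 2 * x ^ 2)
            / (δ + (1 - x ^ 2) * P₁) ^ 2) := by ring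
      have h7 : -(2 * s) ^ 2 / (1 + P₂ + P₁ + Q + 2 * x * s) ^ 2
          = -((2 * s) ^ 2 / (1 + P₂ + P₁ + Q + 2 * x * s) ^ 2) := by ring
      rw [h6, h7]
      linarith
  -- transfer to the original expression
  refine main.congr fun x hx => ?_
  have hAx := hA x hx
  have hBx := hpos1 x hx
  have hgx := hpos2 x hx
  have h1P₂ : (0 : ℝ) < 1 + P₂ := by linarith
  rw [Real.log_div hAx.ne' hBx.ne', Real.log_div hgx.ne' h1P₂.ne']
  ring
end

section
/- The function ρ ↦ (1/2)·log(1 + P₂/(1+P₁+Q+2ρ√(P₁Q))) + (1/2)·log(1+P₁(1−ρ²)) is continuous and concave on [−1,0], and hence attains a unique maximum on [−1,0]. -/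
open Real Set

private lemma key_ineq (s t r : ℝ) (hr0 : -1 ≤ r) (hr1 : r ≤ 0) :
    2 * t^2 * (1 + s^2 * (1 - r^2))^2 ≤
      (1 + s^2 * (1 + r^2)) * (1 + s^2 + t^2 + 2*r*(s*t))^2 := by
  have hr2 : r^2 ≤ 1 := by nlinarith
  have h1 : (0:ℝ) ≤ 1 + s^2 * (1 - r^2) := by nlinarith [sq_nonneg s]
  have h2 : (0:ℝ) ≤ 1 + s^2 * (1 + r^2) := by positivity
  nlinarith [mul_nonneg h2 (sq_nonneg ((t + r*s)^2)),
    mul_nonneg h1 (sq_nonneg (2*r*s*(t+r*s) + (1 + s^2 * (1 - r^2))))]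

private lemma hAB_lemma (P₁ P₂ Q c d e x : ℝ) (hP₁ : 0 < P₁) (hP₂ : 0 < P₂) (hQ : 0 < Q)
    (hd : 0 < d) (he : 0 < e) (hc2 : c^2 = P₁*Q)
    (key : 2*Q*e^2 ≤ (1+P₁+P₁*x^2)*d^2) :
    (P₂*(2*c))*(2*c*(2*d+P₂)) * e^2 < (2*P₁*(1+P₁+P₁*x^2)) * (d*(d+P₂))^2 := by
  have hu : (0:ℝ) < 1+P₁+P₁*x^2 := by positivity
  have hcc : (P₂*(2*c))*(2*c*(2*d+P₂)) * e^2 = 4*P₁*Q*(P₂*(2*d+P₂)) * e^2 := by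
    linear_combination (4*(P₂*(2*d+P₂)) * e^2) * hc2
  rw [hcc]
  have hmul := mul_le_mul_of_nonneg_left key
    (show (0:ℝ) ≤ 2*P₁*(P₂*(2*d+P₂)) by positivity)
  nlinarith [hmul, mul_pos (mul_pos hP₁ hu) (pow_pos hd 4)]

set_option maxHeartbeats 1000000 in

/-- The function
`ρ ↦ (1/2) log(1 + P₂/(1+P₁+Q+2ρ√(P₁Q))) + (1/2) log(1+P₁(1−ρ²))`
is continuous and concave on `[−1,0]`, and attains a unique maximum on `[−1,0]`. -/
theorem sum_rate_objective_concave (P₁ P₂ Q : ℝ)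
    (hP₁ : 0 < P₁) (hP₂ : 0 < P₂) (hQ : 0 < Q) :
    ContinuousOn
      (fun ρ => (1 / 2) * Real.log (1 + P₂ / (1 + P₁ + Q + 2 * ρ * Real.sqrt (P₁ * Q)))
        + (1 / 2) * Real.log (1 + P₁ * (1 - ρ ^ 2))) (Set.Icc (-1 : ℝ) 0) ∧
    ConcaveOn ℝ (Set.Icc (-1 : ℝ) 0)
      (fun ρ => (1 / 2) * Real.log (1 + P₂ / (1 + P₁ + Q + 2 * ρ * Real.sqrt (P₁ * Q)))
        + (1 / 2) * Real.log (1 + P₁ * (1 - ρ ^ 2))) ∧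
    ∃! ρ : ℝ, ρ ∈ Set.Icc (-1 : ℝ) 0 ∧
      IsMaxOn
        (fun ρ => (1 / 2) * Real.log (1 + P₂ / (1 + P₁ + Q + 2 * ρ * Real.sqrt (P₁ * Q)))
          + (1 / 2) * Real.log (1 + P₁ * (1 - ρ ^ 2))) (Set.Icc (-1 : ℝ) 0) ρ := by
  set c := Real.sqrt (P₁ * Q) with hc
  have hcpos : 0 < c := Real.sqrt_pos.mpr (by positivity)
  have hc2 : c ^ 2 = P₁ * Q := Real.sq_sqrt (by positivity)
  set F : ℝ → ℝ := fun ρ => (1 / 2) * Real.log (1 + P₂ / (1 + P₁ + Q + 2 * ρ * c))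
        + (1 / 2) * Real.log (1 + P₁ * (1 - ρ ^ 2)) with hFdef
  -- denominator positivity
  have hd : ∀ x : ℝ, -1 ≤ x → x ≤ 0 → 1 ≤ 1 + P₁ + Q + 2 * x * c := by
    intro x h1 h2
    have hs : Real.sqrt P₁ ^ 2 = P₁ := Real.sq_sqrt hP₁.le
    have ht : Real.sqrt Q ^ 2 = Q := Real.sq_sqrt hQ.le
    have hst : c = Real.sqrt P₁ * Real.sqrt Q := Real.sqrt_mul hP₁.le Q
    rw [hst]
    nlinarith [sq_nonneg (Real.sqrt P₁ + x * Real.sqrt Q),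
      mul_nonneg (sq_nonneg (Real.sqrt Q)) (by nlinarith : (0:ℝ) ≤ 1 - x^2)]
  have he : ∀ x : ℝ, -1 ≤ x → x ≤ 0 → 1 ≤ 1 + P₁ * (1 - x ^ 2) := by
    intro x h1 h2
    nlinarith [mul_nonneg hP₁.le (show (0:ℝ) ≤ 1 - x^2 by nlinarith)]
  -- continuity
  have hcont : ContinuousOn F (Icc (-1:ℝ) 0) := by
    rw [hFdef]
    apply ContinuousOn.add
    · apply ContinuousOn.mul continuousOn_const
      apply ContinuousOn.log
      · exact continuousOn_const.add (continuousOn_const.div (by fun_prop)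
          (fun x hx => ne_of_gt (by linarith [hd x hx.1 hx.2])))
      · intro x hx
        have h1 := hd x hx.1 hx.2
        have h2 : 0 < P₂ / (1 + P₁ + Q + 2 * x * c) := div_pos hP₂ (by linarith)
        exact ne_of_gt (by linarith)
    · apply ContinuousOn.mul continuousOn_const
      apply ContinuousOn.log (by fun_prop)
      intro x hx
      exact ne_of_gt (by linarith [he x hx.1 hx.2])
  -- first derivative
  set F' : ℝ → ℝ := fun x => (1/2) * (-(P₂*(2*c)) / ((1+P₁+Q+2*x*c) * ((1+P₁+Q+2*x*c) + P₂)))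
      + (1/2) * (-(2*P₁*x) / (1 + P₁*(1-x^2))) with hF'def
  have hFderiv : ∀ x ∈ Ioo (-1:ℝ) 0, HasDerivAt F (F' x) x := by
    intro x hx
    have hdx : (0:ℝ) < 1+P₁+Q+2*x*c := lt_of_lt_of_le one_pos (hd x hx.1.le hx.2.le)
    have hex : (0:ℝ) < 1+P₁*(1-x^2) := lt_of_lt_of_le one_pos (he x hx.1.le hx.2.le)
    have h1 : HasDerivAt (fun ρ:ℝ => 1+P₁+Q+2*ρ*c) (2*c) x := by
      simpa using (((hasDerivAt_id x).const_mul (2:ℝ)).mul_const c).const_add (1+P₁+Q)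
    have h2 : HasDerivAt (fun ρ:ℝ => 1 + P₂/(1+P₁+Q+2*ρ*c))
        ((0 * (1+P₁+Q+2*x*c) - P₂ * (2*c)) / (1+P₁+Q+2*x*c)^2) x :=
      ((hasDerivAt_const x P₂).div h1 (ne_of_gt hdx)).const_add 1
    have hinner : (0:ℝ) < 1 + P₂/(1+P₁+Q+2*x*c) := by
      have := div_pos hP₂ hdx; linarith
    have h3 := h2.log (ne_of_gt hinner)
    have h4 : HasDerivAt (fun ρ:ℝ => 1 + P₁*(1-ρ^2)) (P₁ * (-(2*x))) x := by
      have hsq : HasDerivAt (fun ρ:ℝ => 1-ρ^2) (-(2*x)) x := by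
        simpa using ((hasDerivAt_pow 2 x).const_sub 1)
      simpa using (hsq.const_mul P₁).const_add 1
    have h5 := h4.log (ne_of_gt hex)
    have htot := (h3.const_mul (1/2:ℝ)).add (h5.const_mul (1/2:ℝ))
    rw [hFdef, hF'def]
    refine htot.congr_deriv ?_
    have hne1 : (1+P₁+Q+2*x*c) ≠ 0 := ne_of_gt hdx
    have hne2 : (1+P₁+Q+2*x*c) + P₂ ≠ 0 := by positivity
    have hne3 : (1+P₁*(1-x^2)) ≠ 0 := ne_of_gt hex
    have hne4 : 1 + P₂/(1+P₁+Q+2*x*c) ≠ 0 := ne_of_gt hinner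
    field_simp
    ring
  -- second derivative negativity
  have hF2 : ∀ x ∈ Ioo (-1:ℝ) 0, deriv F' x < 0 := by
    intro x hx
    have hdx : (0:ℝ) < 1+P₁+Q+2*x*c := lt_of_lt_of_le one_pos (hd x hx.1.le hx.2.le)
    have hex : (0:ℝ) < 1+P₁*(1-x^2) := lt_of_lt_of_le one_pos (he x hx.1.le hx.2.le)
    have h1 : HasDerivAt (fun ρ:ℝ => 1+P₁+Q+2*ρ*c) (2*c) x := by
      simpa using (((hasDerivAt_id x).const_mul (2:ℝ)).mul_const c).const_add (1+P₁+Q)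
    have hD1 : HasDerivAt (fun ρ:ℝ => (1+P₁+Q+2*ρ*c) * ((1+P₁+Q+2*ρ*c) + P₂))
        (2*c * ((1+P₁+Q+2*x*c) + P₂) + (1+P₁+Q+2*x*c) * (2*c)) x := h1.mul (h1.add_const P₂)
    have hD1pos : (0:ℝ) < (1+P₁+Q+2*x*c) * ((1+P₁+Q+2*x*c) + P₂) := by positivity
    have hT1 : HasDerivAt (fun ρ:ℝ => -(P₂*(2*c)) / ((1+P₁+Q+2*ρ*c) * ((1+P₁+Q+2*ρ*c) + P₂)))
        ((0 * ((1+P₁+Q+2*x*c) * ((1+P₁+Q+2*x*c) + P₂)) -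
          (-(P₂*(2*c))) * (2*c * ((1+P₁+Q+2*x*c) + P₂) + (1+P₁+Q+2*x*c) * (2*c))) /
          ((1+P₁+Q+2*x*c) * ((1+P₁+Q+2*x*c) + P₂))^2) x :=
      (hasDerivAt_const x (-(P₂*(2*c)))).div hD1 (ne_of_gt hD1pos)
    have h4 : HasDerivAt (fun ρ:ℝ => 1 + P₁*(1-ρ^2)) (P₁ * (-(2*x))) x := by
      have hsq : HasDerivAt (fun ρ:ℝ => 1-ρ^2) (-(2*x)) x := by
        simpa using ((hasDerivAt_pow 2 x).const_sub 1)
      simpa using (hsq.const_mul P₁).const_add 1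
    have hnum : HasDerivAt (fun ρ:ℝ => -(2*P₁*ρ)) (-(2*P₁)) x := by
      have h := (((hasDerivAt_id x).const_mul (2*P₁)).neg)
      simp only [mul_one] at h
      exact h
    have hT2 : HasDerivAt (fun ρ:ℝ => -(2*P₁*ρ) / (1 + P₁*(1-ρ^2)))
        ((-(2*P₁) * (1+P₁*(1-x^2)) - (-(2*P₁*x)) * (P₁*(-(2*x)))) / (1+P₁*(1-x^2))^2) x :=
      hnum.div h4 (ne_of_gt hex)
    have htot := (hT1.const_mul (1/2:ℝ)).add (hT2.const_mul (1/2:ℝ))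
    have hderiv_eq : deriv F' x = (1/2:ℝ) * ((0 * ((1+P₁+Q+2*x*c) * ((1+P₁+Q+2*x*c) + P₂)) -
          (-(P₂*(2*c))) * (2*c * ((1+P₁+Q+2*x*c) + P₂) + (1+P₁+Q+2*x*c) * (2*c))) /
          ((1+P₁+Q+2*x*c) * ((1+P₁+Q+2*x*c) + P₂))^2)
        + (1/2:ℝ) * ((-(2*P₁) * (1+P₁*(1-x^2)) - (-(2*P₁*x)) * (P₁*(-(2*x)))) / (1+P₁*(1-x^2))^2) := by
      rw [hF'def]
      exact htot.deriv
    rw [hderiv_eq]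
    -- the key inequality
    have hu : (0:ℝ) < 1+P₁+P₁*x^2 := by positivity
    have key : 2*Q*(1+P₁*(1-x^2))^2 ≤ (1+P₁+P₁*x^2) * (1+P₁+Q+2*x*c)^2 := by
      have hs : Real.sqrt P₁ ^ 2 = P₁ := Real.sq_sqrt hP₁.le
      have ht : Real.sqrt Q ^ 2 = Q := Real.sq_sqrt hQ.le
      have hst : c = Real.sqrt P₁ * Real.sqrt Q := Real.sqrt_mul hP₁.le Q
      have hki := key_ineq (Real.sqrt P₁) (Real.sqrt Q) x hx.1.le hx.2.le
      rw [hs, ht, ← hst] at hki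
      nlinarith [hki]
    have hAB : (P₂*(2*c))*(2*c*(2*(1+P₁+Q+2*x*c)+P₂)) * (1+P₁*(1-x^2))^2 <
        (2*P₁*(1+P₁+P₁*x^2)) * ((1+P₁+Q+2*x*c)*((1+P₁+Q+2*x*c)+P₂))^2 :=
      hAB_lemma P₁ P₂ Q c _ _ x hP₁ hP₂ hQ hdx hex hc2 key
    have term1 : ((P₂*(2*c))*(2*c*(2*(1+P₁+Q+2*x*c)+P₂)))/((1+P₁+Q+2*x*c)*((1+P₁+Q+2*x*c)+P₂))^2
        < (2*P₁*(1+P₁+P₁*x^2))/(1+P₁*(1-x^2))^2 := by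
      rw [div_lt_div_iff₀ (by positivity) (by positivity)]
      exact hAB
    have haux : (1/2:ℝ) * ((0 * ((1+P₁+Q+2*x*c) * ((1+P₁+Q+2*x*c) + P₂)) -
          (-(P₂*(2*c))) * (2*c * ((1+P₁+Q+2*x*c) + P₂) + (1+P₁+Q+2*x*c) * (2*c))) /
          ((1+P₁+Q+2*x*c) * ((1+P₁+Q+2*x*c) + P₂))^2)
        + (1/2:ℝ) * ((-(2*P₁) * (1+P₁*(1-x^2)) - (-(2*P₁*x)) * (P₁*(-(2*x)))) / (1+P₁*(1-x^2))^2)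
        = (1/2:ℝ) * (((P₂*(2*c))*(2*c*(2*(1+P₁+Q+2*x*c)+P₂)))/((1+P₁+Q+2*x*c)*((1+P₁+Q+2*x*c)+P₂))^2)
          - (1/2:ℝ) * ((2*P₁*(1+P₁+P₁*x^2))/(1+P₁*(1-x^2))^2) := by
      ring
    rw [haux]
    linarith [term1]
  -- strict concavity
  have hstrict : StrictConcaveOn ℝ (Icc (-1:ℝ) 0) F := by
    apply strictConcaveOn_of_deriv2_neg (convex_Icc _ _) hcont
    intro x hx
    rw [interior_Icc] at hx
    have hev : deriv F =ᶠ[nhds x] F' :=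
      Filter.eventuallyEq_of_mem (Ioo_mem_nhds hx.1 hx.2) (fun y hy => (hFderiv y hy).deriv)
    have h2 : deriv^[2] F x = deriv (deriv F) x := rfl
    rw [h2, hev.deriv_eq]
    exact hF2 x hx
  -- existence of max
  obtain ⟨z, hz, hzmax⟩ := isCompact_Icc.exists_isMaxOn (nonempty_Icc.mpr (by norm_num)) hcont
  refine ⟨hcont, hstrict.concaveOn, z, ⟨hz, hzmax⟩, ?_⟩
  rintro y ⟨hy, hymax⟩
  by_contra hne
  have heq : F y = F z := le_antisymm (hzmax hy) (hymax hz)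
  have hlt := hstrict.2 hy hz hne (by norm_num : (0:ℝ) < 1/2) (by norm_num : (0:ℝ) < 1/2) (by norm_num)
  have hmem : (1/2:ℝ) • y + (1/2:ℝ) • z ∈ Icc (-1:ℝ) 0 :=
    (convex_Icc (-1:ℝ) 0) hy hz (by norm_num) (by norm_num) (by norm_num)
  have hle : F ((1/2:ℝ) * y + (1/2:ℝ) * z) ≤ F z := by
    have := hzmax hmem
    simpa [smul_eq_mul] using this
  rw [heq] at hlt
  simp only [smul_eq_mul] at hlt
  linarith
end
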